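/- arXiv:0902.0485 — 2 statements merged into one kernel-verified Lean document; each statement's English description precedes it below -/
import Mathlib

section
/- Let φ > 0, let E be an exponentially distributed random variable with rate φ, and let B be a nonnegative random variable independent of E. Then for every real s ≥ 0 with s ≠ φ, E[exp(−s·max(B − E, 0))] = (φ·E[exp(−sB)] − s·E[exp(−φB)])/(φ − s). -/
open MeasureTheory ProbabilityTheory Real Set
open scoped ENNReal NNReal

lemma my_integral_exp_mul {c : ℝ} (hc : c ≠ 0) (a b : ℝ) :
    ∫ x in a..b, exp (c * x) = (exp (c * b) - exp (c * a)) / c := by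
  have h := intervalIntegral.integral_comp_mul_right (f := exp) (a := a) (b := b) hc
  simp only [integral_exp, smul_eq_mul] at h
  calc ∫ x in a..b, exp (c * x) = ∫ x in a..b, exp (x * c) := by simp [mul_comm]
    _ = c⁻¹ * (exp (b * c) - exp (a * c)) := h
    _ = (exp (c * b) - exp (c * a)) / c := by rw [mul_comm b c, mul_comm a c]; ring

lemma inner_int {φ s b : ℝ} (hφ : 0 < φ) (hsφ : s ≠ φ) (hb : 0 ≤ b) :
    ∫ e, exp (-s * max (b - e) 0) ∂(expMeasure φ) =
      (φ * exp (-s * b) - s * exp (-φ * b)) / (φ - s) := by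
  have hpdf_nonneg := exponentialPDFReal_nonneg hφ
  have hmeas := measurable_exponentialPDFReal φ
  have hexp : expMeasure φ
      = volume.withDensity (fun x => ((exponentialPDFReal φ x).toNNReal : ℝ≥0∞)) := by
    rfl
  rw [hexp, integral_withDensity_eq_integral_smul hmeas.real_toNNReal]
  have hcong : ∀ x : ℝ, (exponentialPDFReal φ x).toNNReal • exp (-s * max (b - x) 0)
      = exponentialPDFReal φ x * exp (-s * max (b - x) 0) := by
    intro x
    rw [NNReal.smul_def, smul_eq_mul, Real.coe_toNNReal _ (hpdf_nonneg x)]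
  simp only [hcong]
  set h : ℝ → ℝ := fun x => exponentialPDFReal φ x * exp (-s * max (b - x) 0) with hh
  have h1 : ∀ x ∈ Ioc 0 b, h x = (φ * exp (-s * b)) * exp ((s - φ) * x) := by
    intro x hx
    have h0 : (0:ℝ) ≤ x := le_of_lt hx.1
    have : max (b - x) 0 = b - x := max_eq_left (by linarith [hx.2])
    simp only [hh, exponentialPDFReal, gammaPDFReal, if_pos h0, this, pow_one, Real.Gamma_one,
      div_one, sub_self, Real.rpow_zero, mul_one]
    rw [Real.rpow_one, mul_assoc, ← Real.exp_add, mul_assoc, ← Real.exp_add]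
    congr 1
    ring_nf
  have h2 : ∀ x ∈ Ioi b, h x = φ * exp (-(φ * x)) := by
    intro x hx
    have h0 : (0:ℝ) ≤ x := le_trans hb (le_of_lt hx)
    have : max (b - x) 0 = 0 := max_eq_right (by simp at hx; linarith)
    simp [hh, exponentialPDFReal, gammaPDFReal, if_pos h0, this]
  have hInt1 : IntegrableOn h (Ioc 0 b) := by
    refine IntegrableOn.congr_fun ?_ (fun x hx => (h1 x hx).symm) measurableSet_Ioc
    exact (Continuous.integrableOn_Ioc (by continuity))
  have hInt2 : IntegrableOn h (Ioi b) := by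
    refine IntegrableOn.congr_fun ?_ (fun x hx => (h2 x hx).symm) measurableSet_Ioi
    have := (exp_neg_integrableOn_Ioi b hφ).const_mul φ
    simpa [neg_mul, IntegrableOn] using this
  have hzero : ∀ x, x ∉ Ici (0:ℝ) → h x = 0 := by
    intro x hx
    simp only [mem_Ici, not_le] at hx
    simp [hh, exponentialPDFReal, gammaPDFReal, if_neg (not_le.mpr hx)]
  rw [← setIntegral_eq_integral_of_forall_compl_eq_zero hzero, integral_Ici_eq_integral_Ioi,
    ← Ioc_union_Ioi_eq_Ioi hb,
    setIntegral_union (Ioc_disjoint_Ioi le_rfl) measurableSet_Ioi hInt1 hInt2]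
  have hd1 : s - φ ≠ 0 := sub_ne_zero.mpr hsφ
  have hd2 : φ - s ≠ 0 := sub_ne_zero.mpr (Ne.symm hsφ)
  have e1 : ∫ x in Ioc 0 b, h x
      = (φ * exp (-s * b)) * ((exp ((s - φ) * b) - 1) / (s - φ)) := by
    rw [setIntegral_congr_fun measurableSet_Ioc h1, integral_const_mul,
      ← intervalIntegral.integral_of_le hb, my_integral_exp_mul hd1 0 b]
    simp
  have e2 : ∫ x in Ioi b, h x = exp (-φ * b) := by
    rw [setIntegral_congr_fun measurableSet_Ioi h2, integral_const_mul]
    have hc : (∫ x in Ioi b, exp (-(φ * x)))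
        = φ⁻¹ • ∫ x in Ioi (φ * b), exp (-x) :=
      integral_comp_mul_left_Ioi (fun y => exp (-y)) b hφ
    rw [hc, integral_exp_neg_Ioi, smul_eq_mul, neg_mul]
    field_simp
  rw [e1, e2]
  have hmul : exp (-s * b) * exp ((s - φ) * b) = exp (-φ * b) := by
    rw [← Real.exp_add]; congr 1; ring
  generalize exp (-s * b) = A at hmul ⊢
  generalize exp ((s - φ) * b) = E at hmul ⊢
  generalize exp (-φ * b) = B at hmul ⊢
  field_simp
  linear_combination φ * (φ - s) * hmul

/-- If `E` is exponentially distributed with rate `φ > 0` and `B ≥ 0` is independent of `E`,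
then for `0 ≤ s`, `s ≠ φ`,
`E[exp(-s (B - E)⁺)] = (φ E[exp(-s B)] - s E[exp(-φ B)]) / (φ - s)`. -/
theorem laplace_transform_pos_part_sub_exponential
    {Ω : Type*} [MeasurableSpace Ω] (P : Measure Ω) [IsProbabilityMeasure P]
    (φ : ℝ) (hφ : 0 < φ) (E B : Ω → ℝ)
    (hE : Measurable E) (hB : Measurable B)
    (hEexp : Measure.map E P = expMeasure φ)
    (hBnonneg : ∀ᵐ ω ∂P, 0 ≤ B ω)
    (hindep : IndepFun B E P)
    (s : ℝ) (hs : 0 ≤ s) (hsφ : s ≠ φ) :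
    ∫ ω, exp (-s * max (B ω - E ω) 0) ∂P =
      (φ * ∫ ω, exp (-s * B ω) ∂P - s * ∫ ω, exp (-φ * B ω) ∂P) / (φ - s) := by
  have hBae : AEMeasurable B P := hB.aemeasurable
  have hEae : AEMeasurable E P := hE.aemeasurable
  haveI : IsProbabilityMeasure (expMeasure φ) := isProbabilityMeasure_expMeasure hφ
  set μB := Measure.map B P with hμB
  haveI : IsProbabilityMeasure μB := Measure.isProbabilityMeasure_map hBae
  have hmap : Measure.map (fun ω => (B ω, E ω)) P = μB.prod (expMeasure φ) := by
    rw [hμB, ← hEexp]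
    exact (indepFun_iff_map_prod_eq_prod_map_map hBae hEae).mp hindep
  have hfm : Measurable fun p : ℝ × ℝ => exp (-s * max (p.1 - p.2) 0) := by
    fun_prop
  have hbound : ∀ p : ℝ × ℝ, ‖exp (-s * max (p.1 - p.2) 0)‖ ≤ 1 := by
    intro p
    rw [Real.norm_eq_abs, abs_of_pos (exp_pos _)]
    rw [show (1:ℝ) = exp 0 by simp]
    exact Real.exp_le_exp.mpr (mul_nonpos_of_nonpos_of_nonneg (by linarith) (le_max_right _ _))
  have hint : Integrable (fun p : ℝ × ℝ => exp (-s * max (p.1 - p.2) 0))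
      (μB.prod (expMeasure φ)) :=
    (integrable_const 1).mono' hfm.aestronglyMeasurable (Filter.Eventually.of_forall hbound)
  have step1 : ∫ ω, exp (-s * max (B ω - E ω) 0) ∂P
      = ∫ p : ℝ × ℝ, exp (-s * max (p.1 - p.2) 0) ∂(μB.prod (expMeasure φ)) := by
    rw [← hmap, integral_map (hB.prodMk hE).aemeasurable hfm.aestronglyMeasurable]
  rw [step1, MeasureTheory.integral_prod _ hint]
  have hae : ∀ᵐ b ∂μB, 0 ≤ b := by
    rw [hμB]
    exact (ae_map_iff hBae measurableSet_Ici).mpr hBnonneg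
  have step2 : ∫ b, (∫ e, exp (-s * max (b - e) 0) ∂(expMeasure φ)) ∂μB
      = ∫ b, (φ * exp (-s * b) - s * exp (-φ * b)) / (φ - s) ∂μB := by
    refine integral_congr_ae (hae.mono fun b hb => ?_)
    exact inner_int hφ hsφ hb
  rw [step2]
  have hbdd : ∀ c : ℝ, 0 ≤ c → Integrable (fun b => exp (-c * b)) μB := by
    intro c hc
    refine (integrable_const 1).mono'
      (by fun_prop : Measurable fun b : ℝ => exp (-c * b)).aestronglyMeasurable
      (hae.mono fun b hb => ?_)
    rw [Real.norm_eq_abs, abs_of_pos (exp_pos _), show (1:ℝ) = exp 0 by simp]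
    exact Real.exp_le_exp.mpr (mul_nonpos_of_nonpos_of_nonneg (by linarith) hb)
  have hb1 := hbdd s hs
  have hb2 := hbdd φ hφ.le
  have m1 : ∫ b, exp (-s * b) ∂μB = ∫ ω, exp (-s * B ω) ∂P := by
    rw [hμB, integral_map hBae (by fun_prop : Measurable fun b : ℝ => exp (-s * b)).aestronglyMeasurable]
  have m2 : ∫ b, exp (-φ * b) ∂μB = ∫ ω, exp (-φ * B ω) ∂P := by
    rw [hμB, integral_map hBae (by fun_prop : Measurable fun b : ℝ => exp (-φ * b)).aestronglyMeasurable]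
  rw [integral_div, integral_sub (hb1.const_mul φ) (hb2.const_mul s),
    integral_const_mul, integral_const_mul, m1, m2]
end

section
/- Let φ > 0 and let M, V, C be mutually independent nonnegative random variables, where V is exponentially distributed with rate φ. Then for every real s ≥ 0 with s ≠ φ, E[exp(−s·max(C + M − V, M))] = E[exp(−sM)] · (φ·E[exp(−sC)] − s·E[exp(−φC)])/(φ − s). (This is the abstract form of the key equation E[e^{−sV}] = [q(s−Φ(q))/(Φ(q)(ψ(s)−q))]·[Φ(q)E[e^{−sF(V)}] − sE[e^{−Φ(q)F(V)}]]/(Φ(q)−s), obtained since max(C+M−V, M) = M + (C−V)⁺ and M is independent of (C,V).) -/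
open MeasureTheory ProbabilityTheory Real
open scoped ENNReal NNReal

lemma exponentialPDFReal_eq' (r x : ℝ) :
    exponentialPDFReal r x = if 0 ≤ x then r * exp (-(r * x)) else 0 := by
  rw [exponentialPDFReal, gammaPDFReal]
  simp only [rpow_one, Real.Gamma_one, div_one, sub_self, rpow_zero, mul_one]

lemma aux_exp_integral {φ s c : ℝ} (hφ : 0 < φ) (hs : 0 ≤ s) (hsφ : s ≠ φ) (hc : 0 ≤ c) :
    ∫ v, exp (-s * max (c - v) 0) ∂(expMeasure φ) =
      (φ * exp (-s * c) - s * exp (-φ * c)) / (φ - s) := by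
  have hk : s - φ ≠ 0 := sub_ne_zero.mpr hsφ
  have hφs : φ - s ≠ 0 := sub_ne_zero.mpr (Ne.symm hsφ)
  have hμ : expMeasure φ
      = volume.withDensity (fun x => ((exponentialPDFReal φ x).toNNReal : ℝ≥0∞)) := rfl
  have hmeas : Measurable (fun x => (exponentialPDFReal φ x).toNNReal) :=
    measurable_real_toNNReal.comp (measurable_exponentialPDFReal φ)
  rw [hμ, integral_withDensity_eq_integral_smul hmeas]
  have h1 : ∀ x : ℝ, ((exponentialPDFReal φ x).toNNReal : ℝ) = exponentialPDFReal φ x :=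
    fun x => Real.coe_toNNReal _ (exponentialPDFReal_nonneg hφ x)
  simp only [NNReal.smul_def, smul_eq_mul, h1]
  set F : ℝ → ℝ := fun x => φ * exp (-(φ * x)) * exp (-s * max (c - x) 0) with hF
  have hFc : Continuous F := by
    apply Continuous.mul
    · exact continuous_const.mul ((continuous_const.mul continuous_id).neg.rexp)
    · exact (continuous_const.mul ((continuous_const.sub continuous_id).max
        continuous_const)).rexp
  have hne : ∀ᵐ x : ℝ, x ≠ (0:ℝ) := by
    rw [ae_iff]
    simp only [not_not, Set.setOf_eq_eq_singleton]
    exact Real.volume_singleton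
  have h0 : ∀ᵐ x : ℝ, x ∉ Set.Ioi (0:ℝ) →
      exponentialPDFReal φ x * exp (-s * max (c - x) 0) = 0 := by
    filter_upwards [hne] with x hx hnotin
    have hxle : ¬ (0 ≤ x) := by
      simp only [Set.mem_Ioi, not_lt] at hnotin
      exact fun h => hx (le_antisymm hnotin h)
    rw [exponentialPDFReal_eq', if_neg hxle, zero_mul]
  rw [← setIntegral_eq_integral_of_ae_compl_eq_zero h0]
  have hcongr0 : ∀ x ∈ Set.Ioi (0:ℝ),
      exponentialPDFReal φ x * exp (-s * max (c - x) 0) = F x := by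
    intro x hx
    rw [exponentialPDFReal_eq', if_pos (le_of_lt hx)]
  rw [setIntegral_congr_fun measurableSet_Ioi hcongr0]
  have hbound : ∀ x : ℝ, ‖F x‖ ≤ φ * exp (-φ * x) := by
    intro x
    rw [Real.norm_eq_abs, abs_of_nonneg (by positivity)]
    have h2 : exp (-s * max (c - x) 0) ≤ 1 := by
      rw [Real.exp_le_one_iff]
      nlinarith [le_max_right (c - x) (0:ℝ)]
    calc F x ≤ φ * exp (-(φ * x)) * 1 := by
          exact mul_le_mul_of_nonneg_left h2 (by positivity)
      _ = φ * exp (-φ * x) := by rw [mul_one, neg_mul]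
  have hInt2 : IntegrableOn F (Set.Ioi c) volume := by
    refine Integrable.mono' ((exp_neg_integrableOn_Ioi c hφ).const_mul φ)
      hFc.aestronglyMeasurable.restrict (ae_of_all _ fun x => hbound x)
  have hInt1 : IntegrableOn F (Set.Ioc 0 c) volume := hFc.integrableOn_Ioc
  rw [← Set.Ioc_union_Ioi_eq_Ioi hc,
    setIntegral_union (Set.Ioc_disjoint_Ioi le_rfl) measurableSet_Ioi hInt1 hInt2]
  have hI2 : ∫ x in Set.Ioi c, F x = exp (-(φ * c)) := by
    have hcongr2 : ∀ x ∈ Set.Ioi c, F x = φ * exp (-(φ * x)) := by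
      intro x hx
      have : max (c - x) 0 = 0 := max_eq_right (by simp only [Set.mem_Ioi] at hx; linarith)
      rw [hF]
      simp only [this, mul_zero, Real.exp_zero, mul_one]
    rw [setIntegral_congr_fun measurableSet_Ioi hcongr2, integral_const_mul]
    have : (fun x : ℝ => exp (-(φ * x))) = fun x => (fun y => exp (-y)) (φ * x) := rfl
    rw [this, integral_comp_mul_left_Ioi (fun y => exp (-y)) c hφ, integral_exp_neg_Ioi,
      smul_eq_mul]
    field_simp
  have hI1 : ∫ x in Set.Ioc 0 c, F x
      = φ * exp (-(s * c)) * ((exp ((s - φ) * c) - 1) / (s - φ)) := by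
    have hcongr1 : ∀ x ∈ Set.Ioc (0:ℝ) c, F x = φ * exp (-(s * c)) * exp ((s - φ) * x) := by
      intro x hx
      have hmax : max (c - x) 0 = c - x := max_eq_left (by linarith [hx.2])
      rw [hF]
      simp only [hmax]
      rw [mul_assoc, mul_assoc, ← Real.exp_add, ← Real.exp_add]
      congr 1
      ring
    rw [setIntegral_congr_fun measurableSet_Ioc hcongr1,
      ← intervalIntegral.integral_of_le hc, intervalIntegral.integral_const_mul]
    congr 1
    have := intervalIntegral.integral_comp_mul_left (a := (0:ℝ)) (b := c)
      (f := fun y => exp y) (c := s - φ) hk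
    rw [this, mul_zero, integral_exp, Real.exp_zero, smul_eq_mul]
    ring
  rw [hI1, hI2]
  have hkey : exp (-(s * c)) * exp ((s - φ) * c) = exp (-(φ * c)) := by
    rw [← Real.exp_add]; congr 1; ring
  rw [show -s * c = -(s * c) by ring, show -φ * c = -(φ * c) by ring]
  field_simp
  rw [mul_comm c (s - φ)]
  linear_combination (φ - s) * φ * hkey

/-- Key equation in abstract form: if `M, V, C` are mutually independent nonnegative random
variables with `V` exponential of rate `φ > 0`, then for `0 ≤ s`, `s ≠ φ`,
`E[exp(-s max(C + M - V, M))]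
  = E[exp(-s M)] (φ E[exp(-s C)] - s E[exp(-φ C)]) / (φ - s)`. -/
theorem laplace_transform_max_indep_exponential
    {Ω : Type*} [MeasurableSpace Ω] (P : Measure Ω) [IsProbabilityMeasure P]
    (φ : ℝ) (hφ : 0 < φ) (M V C : Ω → ℝ)
    (hM : Measurable M) (hV : Measurable V) (hC : Measurable C)
    (hMnonneg : ∀ᵐ ω ∂P, 0 ≤ M ω) (hCnonneg : ∀ᵐ ω ∂P, 0 ≤ C ω)
    (hVexp : Measure.map V P = expMeasure φ)
    (hindep : iIndepFun ![M, V, C] P)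
    (s : ℝ) (hs : 0 ≤ s) (hsφ : s ≠ φ) :
    ∫ ω, exp (-s * max (C ω + M ω - V ω) (M ω)) ∂P =
      (∫ ω, exp (-s * M ω) ∂P) *
        ((φ * ∫ ω, exp (-s * C ω) ∂P - s * ∫ ω, exp (-φ * C ω) ∂P) / (φ - s)) := by
  have hsm : ∀ t : ℝ, Measurable (fun x : ℝ => exp (-t * x)) := fun t =>
    ((continuous_const.mul continuous_id).rexp).measurable
  have hPexp : IsProbabilityMeasure (expMeasure φ) := isProbabilityMeasure_expMeasure hφ
  have hPC : IsProbabilityMeasure (P.map C) := Measure.isProbabilityMeasure_map hC.aemeasurable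
  -- Step A : pointwise factorization
  have hmaxeq : ∀ ω, exp (-s * max (C ω + M ω - V ω) (M ω))
      = exp (-s * M ω) * exp (-s * max (C ω - V ω) 0) := by
    intro ω
    rw [← Real.exp_add]
    congr 1
    have h : max (C ω + M ω - V ω) (M ω) = max (C ω - V ω) 0 + M ω := by
      rw [← max_add_add_right]
      congr 1 <;> ring
    rw [h]; ring
  simp only [hmaxeq]
  -- Step B : independence factorization
  have hmeas_all : ∀ i, Measurable (![M, V, C] i) := by
    intro i
    fin_cases i
    · exact hM
    · exact hV
    · exact hC
  have hpairM : IndepFun (fun ω => (V ω, C ω)) M P := by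
    have := hindep.indepFun_prodMk hmeas_all 1 2 0 (by decide) (by decide)
    simpa using this
  have hψm : Measurable (fun p : ℝ × ℝ => exp (-s * max (p.2 - p.1) 0)) := by
    have : Continuous fun p : ℝ × ℝ => -s * max (p.2 - p.1) 0 :=
      continuous_const.mul ((continuous_snd.sub continuous_fst).max continuous_const)
    exact this.rexp.measurable
  have hφm : Measurable (fun x : ℝ => exp (-s * x)) := by
    have : Continuous fun x : ℝ => -s * x := continuous_const.mul continuous_id
    exact this.rexp.measurable
  have hXY : IndepFun (fun ω => exp (-s * M ω)) (fun ω => exp (-s * max (C ω - V ω) 0)) P :=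
    hpairM.symm.comp hφm hψm
  rw [hXY.integral_fun_mul_eq_mul_integral (hφm.comp hM).aestronglyMeasurable
    ((hψm.comp (hV.prodMk hC)).aestronglyMeasurable)]
  congr 1
  -- Step C : compute E[exp(-s (C - V)⁺)]
  have hCV : IndepFun C V P := by
    have := hindep.indepFun (show (2 : Fin 3) ≠ 1 by decide)
    simpa using this
  have hmap : P.map (fun ω => (C ω, V ω)) = (P.map C).prod (expMeasure φ) := by
    rw [← hVexp]
    exact (indepFun_iff_map_prod_eq_prod_map_map hC.aemeasurable hV.aemeasurable).mp hCV
  have hgm : Measurable (fun p : ℝ × ℝ => exp (-s * max (p.1 - p.2) 0)) := by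
    have : Continuous fun p : ℝ × ℝ => -s * max (p.1 - p.2) 0 :=
      continuous_const.mul ((continuous_fst.sub continuous_snd).max continuous_const)
    exact this.rexp.measurable
  have step1 : ∫ ω, exp (-s * max (C ω - V ω) 0) ∂P
      = ∫ p : ℝ × ℝ, exp (-s * max (p.1 - p.2) 0) ∂((P.map C).prod (expMeasure φ)) := by
    rw [← hmap, integral_map (hC.prodMk hV).aemeasurable hgm.aestronglyMeasurable]
  have hgint : Integrable (fun p : ℝ × ℝ => exp (-s * max (p.1 - p.2) 0))
      ((P.map C).prod (expMeasure φ)) := by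
    refine Integrable.mono' (integrable_const 1) hgm.aestronglyMeasurable
      (ae_of_all _ fun p => ?_)
    rw [Real.norm_eq_abs, abs_of_nonneg (Real.exp_nonneg _)]
    rw [Real.exp_le_one_iff]
    nlinarith [le_max_right (p.1 - p.2) (0:ℝ)]
  rw [step1, integral_prod _ hgint]
  have hCpos : ∀ᵐ c ∂(P.map C), 0 ≤ c := by
    rw [ae_map_iff hC.aemeasurable (measurableSet_Ici : MeasurableSet (Set.Ici (0:ℝ)))]
    exact hCnonneg
  have step2 : ∫ c, (∫ v, exp (-s * max (c - v) 0) ∂(expMeasure φ)) ∂(P.map C)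
      = ∫ c, (φ * exp (-s * c) - s * exp (-φ * c)) / (φ - s) ∂(P.map C) := by
    refine integral_congr_ae ?_
    filter_upwards [hCpos] with c hc
    exact aux_exp_integral hφ hs hsφ hc
  rw [step2, integral_div]
  have hintsC : Integrable (fun c : ℝ => exp (-s * c)) (P.map C) := by
    refine Integrable.mono' (integrable_const 1)
      (hsm s).aestronglyMeasurable ?_
    filter_upwards [hCpos] with c hc
    rw [Real.norm_eq_abs, abs_of_nonneg (Real.exp_nonneg _), Real.exp_le_one_iff]
    nlinarith
  have hintφC : Integrable (fun c : ℝ => exp (-φ * c)) (P.map C) := by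
    refine Integrable.mono' (integrable_const 1)
      (hsm φ).aestronglyMeasurable ?_
    filter_upwards [hCpos] with c hc
    rw [Real.norm_eq_abs, abs_of_nonneg (Real.exp_nonneg _), Real.exp_le_one_iff]
    nlinarith
  rw [integral_sub (hintsC.const_mul φ) (hintφC.const_mul s), integral_const_mul,
    integral_const_mul,
    integral_map hC.aemeasurable (hsm s).aestronglyMeasurable,
    integral_map hC.aemeasurable (hsm φ).aestronglyMeasurable]
end
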